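/- Let f : ℝ → ℝ be integrable and monotone increasing, r > 0, Δt ≥ 2r, and a : Fin S → ℝ an AoI vector. Define h(i) as in S-AUS (average AoI cost over [t₀, t₀+Δt] when node i is visited). If i* maximizes a, i.e., a(i) ≤ a(i*) for all i, then h(i*) ≤ h(i) for all i. -/

import Mathlib

open MeasureTheory Finset

lemma shift_int_le (f : ℝ → ℝ)
    (hfint : ∀ x y : ℝ, IntervalIntegrable f volume x y) (hf : Monotone f)
    (u v c d : ℝ) (huv : u ≤ v) (hcd : c ≤ d) :
    (∫ x in (u + c)..(v + c), f x) ≤ ∫ x in (u + d)..(v + d), f x := by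
  rw [← intervalIntegral.integral_comp_add_right f c,
      ← intervalIntegral.integral_comp_add_right f d]
  apply intervalIntegral.integral_mono_on huv
  · have := (hfint (u + c) (v + c)).comp_add_right c
    simpa using this
  · have := (hfint (u + d) (v + d)).comp_add_right d
    simpa using this
  · intro x _
    exact hf (by linarith)

/-- Lemma 2 of the paper: in S-AUS, visiting the node with largest AoI
minimizes the average AoI cost of a single trip. -/
theorem stmt_2 (S : ℕ) (f : ℝ → ℝ)
    (hfint : ∀ x y : ℝ, IntervalIntegrable f volume x y) (hf : Monotone f)
    (r Δt : ℝ) (hr : 0 < r) (hΔt : 2 * r ≤ Δt)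
    (a : Fin S → ℝ) (h : Fin S → ℝ)
    (hdef : ∀ i : Fin S, h i =
      (1 / Δt) * ((∑ s ∈ Finset.univ.erase i, ∫ x in (a s)..(a s + Δt), f x)
        + (∫ x in (a i)..(a i + 2 * r), f x)
        + ∫ x in r..(Δt - r), f x))
    (istar : Fin S) (hmax : ∀ i : Fin S, a i ≤ a istar) :
    ∀ i : Fin S, h istar ≤ h i := by
  intro i
  rw [hdef i, hdef istar]
  have hΔpos : (0:ℝ) < Δt := by linarith
  apply mul_le_mul_of_nonneg_left _ (by positivity)
  have hsum : ∀ j : Fin S, (∑ s ∈ Finset.univ.erase j, ∫ x in (a s)..(a s + Δt), f x)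
      = (∑ s : Fin S, ∫ x in (a s)..(a s + Δt), f x) - ∫ x in (a j)..(a j + Δt), f x := by
    intro j
    rw [eq_sub_iff_add_eq, add_comm]
    exact Finset.add_sum_erase Finset.univ (fun s => ∫ x in (a s)..(a s + Δt), f x)
      (Finset.mem_univ j)
  rw [hsum i, hsum istar]
  have key : (∫ x in (a i)..(a i + Δt), f x) + (∫ x in (a istar)..(a istar + 2 * r), f x)
      ≤ (∫ x in (a istar)..(a istar + Δt), f x) + (∫ x in (a i)..(a i + 2 * r), f x) := by
    have h1 : (∫ x in (a i + 2 * r)..(a i + Δt), f x)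
        ≤ ∫ x in (a istar + 2 * r)..(a istar + Δt), f x := by
      have := shift_int_le f hfint hf (2 * r) Δt (a i) (a istar) hΔt (hmax i)
      simpa [add_comm] using this
    have e1 : (∫ x in (a i)..(a i + Δt), f x)
        = (∫ x in (a i)..(a i + 2 * r), f x) + ∫ x in (a i + 2 * r)..(a i + Δt), f x :=
      (intervalIntegral.integral_add_adjacent_intervals (hfint _ _) (hfint _ _)).symm
    have e2 : (∫ x in (a istar)..(a istar + Δt), f x)
        = (∫ x in (a istar)..(a istar + 2 * r), f x)
          + ∫ x in (a istar + 2 * r)..(a istar + Δt), f x :=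
      (intervalIntegral.integral_add_adjacent_intervals (hfint _ _) (hfint _ _)).symm
    rw [e1, e2]
    linarith
  linarith
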